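/- Let f : ℕ → ℕ be a multiplicative function (f(1) = 1 and f(ab) = f(a)f(b) whenever gcd(a,b) = 1) satisfying f(p^{k-1}) ≤ f(p^k) for every prime p and integer k ≥ 1. Then f is convenient if and only if for every prime p and every f-practical positive integer m coprime to p, the inequality f(p) ≤ S_f(m) + 1 implies f(p^{k+1}) ≤ S_f(mp^k) + 1 for every integer k ≥ 0. -/

import Mathlib

open Finset

def Sf (f : ℕ → ℕ) (n : ℕ) : ℕ := ∑ d ∈ n.divisors, f d

def FPractical (f : ℕ → ℕ) (n : ℕ) : Prop :=
  0 < n ∧ ∀ m : ℕ, 0 < m → m ≤ Sf f n →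
    ∃ D : Finset ℕ, D ⊆ n.divisors ∧ m = ∑ d ∈ D, f d

def WeaklyFPractical (f : ℕ → ℕ) (n : ℕ) : Prop :=
  0 < n ∧ ∃ l : List ℕ,
    l.Nodup ∧
    l.toFinset = n.primeFactors ∧
    l.Pairwise (fun p q => f p ≤ f q) ∧
    ∀ i : Fin l.length,
      f (l.get i) ≤ Sf f (((l.take i).map fun p => p ^ n.factorization p).prod) + 1

/-- f is convenient if every weakly f-practical number is f-practical. -/
def Convenient (f : ℕ → ℕ) : Prop :=
  ∀ n : ℕ, WeaklyFPractical f n → FPractical f n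

section Helpers
variable {f : ℕ → ℕ}

lemma fpow_mono (hf1 : f 1 = 1)
    (hmono : ∀ p k : ℕ, p.Prime → 1 ≤ k → f (p ^ (k - 1)) ≤ f (p ^ k))
    {p : ℕ} (hp : p.Prime) : Monotone fun k => f (p ^ k) := by
  apply monotone_nat_of_le_succ
  intro k
  have := hmono p (k + 1) hp (by omega)
  simpa using this

lemma one_le_fpow (hf1 : f 1 = 1)
    (hmono : ∀ p k : ℕ, p.Prime → 1 ≤ k → f (p ^ (k - 1)) ≤ f (p ^ k))
    {p : ℕ} (hp : p.Prime) (k : ℕ) : 1 ≤ f (p ^ k) := by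
  have := fpow_mono hf1 hmono hp (Nat.zero_le k)
  simpa [hf1] using this

lemma one_le_f (hf1 : f 1 = 1)
    (hmul : ∀ a b : ℕ, Nat.Coprime a b → f (a * b) = f a * f b)
    (hmono : ∀ p k : ℕ, p.Prime → 1 ≤ k → f (p ^ (k - 1)) ≤ f (p ^ k)) :
    ∀ n : ℕ, n ≠ 0 → 1 ≤ f n := by
  intro n
  induction n using Nat.strong_induction_on with
  | _ n ih =>
    intro hn
    rcases eq_or_ne n 1 with rfl | hn1
    · simp [hf1]
    have h2 : 2 ≤ n := by omega
    set p := n.minFac with hpdef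
    have hp : p.Prime := Nat.minFac_prime hn1
    have hdvd : p ∣ n := Nat.minFac_dvd n
    have hsplit : p ^ n.factorization p * (n / p ^ n.factorization p) = n :=
      Nat.ordProj_mul_ordCompl_eq_self n p
    have hcop : Nat.Coprime (p ^ n.factorization p) (n / p ^ n.factorization p) :=
      (Nat.coprime_ordCompl hp hn).pow_left _
    have hlt : n / p ^ n.factorization p < n := by
      apply Nat.div_lt_self (by omega)
      have h1 : 1 ≤ n.factorization p := hp.factorization_pos_of_dvd hn hdvd
      calc 1 < p := hp.one_lt
        _ = p ^ 1 := (pow_one p).symm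
        _ ≤ p ^ n.factorization p := Nat.pow_le_pow_right hp.pos h1
    have hne : n / p ^ n.factorization p ≠ 0 := by
      have := Nat.ordCompl_pos p hn
      omega
    calc 1 = 1 * 1 := by norm_num
      _ ≤ f (p ^ n.factorization p) * f (n / p ^ n.factorization p) :=
        Nat.mul_le_mul (one_le_fpow hf1 hmono hp _) (ih _ hlt hne)
      _ = f n := by rw [← hmul _ _ hcop, hsplit]

lemma Sf_dvd_le (f : ℕ → ℕ) {a b : ℕ} (h : a ∣ b) (hb : b ≠ 0) : Sf f a ≤ Sf f b :=
  Finset.sum_le_sum_of_subset (Nat.divisors_subset_of_dvd hb h)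

lemma f_le_Sf (f : ℕ → ℕ) {d n : ℕ} (h : d ∣ n) (hn : n ≠ 0) : f d ≤ Sf f n :=
  Finset.single_le_sum (fun i _ => Nat.zero_le _) (Nat.mem_divisors.2 ⟨h, hn⟩)

lemma one_le_Sf (hf1 : f 1 = 1) {n : ℕ} (hn : n ≠ 0) : 1 ≤ Sf f n := by
  have := f_le_Sf f (one_dvd n) hn
  omega

lemma Sf_one (hf1 : f 1 = 1) : Sf f 1 = 1 := by simp [Sf, hf1]

lemma Sf_mul (hf1 : f 1 = 1)
    (hmul : ∀ a b : ℕ, Nat.Coprime a b → f (a * b) = f a * f b)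
    {a b : ℕ} (hab : Nat.Coprime a b) : Sf f (a * b) = Sf f a * Sf f b := by
  classical
  set F : ArithmeticFunction ℕ := ⟨fun n => if n = 0 then 0 else f n, if_pos rfl⟩ with hF
  have hFm : F.IsMultiplicative := by
    constructor
    · show (if 1 = 0 then 0 else f 1) = 1
      simp [hf1]
    · intro m n hmn
      show (if m * n = 0 then 0 else f (m * n)) =
        (if m = 0 then 0 else f m) * (if n = 0 then 0 else f n)
      rcases eq_or_ne m 0 with rfl | hm
      · simp
      rcases eq_or_ne n 0 with rfl | hn
      · simp
      rw [if_neg (by positivity), if_neg hm, if_neg hn, hmul m n hmn]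
  have hZm : (ArithmeticFunction.zeta * F).IsMultiplicative :=
    ArithmeticFunction.IsMultiplicative.mul ArithmeticFunction.isMultiplicative_zeta hFm
  have key : ∀ x : ℕ, Sf f x = (ArithmeticFunction.zeta * F) x := by
    intro x
    rw [ArithmeticFunction.zeta_mul_apply]
    apply Finset.sum_congr rfl
    intro d hd
    have hd0 : d ≠ 0 := Nat.pos_of_mem_divisors hd |>.ne'
    show f d = if d = 0 then 0 else f d
    rw [if_neg hd0]
  rw [key, key, key, hZm.map_mul_of_coprime hab]

lemma Sf_prime_pow (f : ℕ → ℕ) {p : ℕ} (hp : p.Prime) (e : ℕ) :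
    Sf f (p ^ e) = ∑ j ∈ Finset.range (e + 1), f (p ^ j) :=
  Nat.sum_divisors_prime_pow hp
lemma FPractical.repr {f : ℕ → ℕ} {n : ℕ} (h : FPractical f n) {t : ℕ} (ht : t ≤ Sf f n) :
    ∃ D : Finset ℕ, D ⊆ n.divisors ∧ t = ∑ d ∈ D, f d := by
  rcases Nat.eq_zero_or_pos t with rfl | htp
  · exact ⟨∅, by simp⟩
  · exact h.2 t htp ht

lemma FPractical.one {f : ℕ → ℕ} (hf1 : f 1 = 1) : FPractical f 1 := by
  refine ⟨one_pos, fun m hm hle => ⟨{1}, by simp, ?_⟩⟩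
  rw [Sf_one hf1] at hle
  simp [hf1]; omega

lemma fpractical_mul_pow (hf1 : f 1 = 1)
    (hmul : ∀ a b : ℕ, Nat.Coprime a b → f (a * b) = f a * f b)
    (hmono : ∀ p k : ℕ, p.Prime → 1 ≤ k → f (p ^ (k - 1)) ≤ f (p ^ k))
    {p m : ℕ} (hp : p.Prime) (hcop : Nat.Coprime p m) (hm : FPractical f m)
    (hbound : ∀ j : ℕ, f (p ^ (j + 1)) ≤ Sf f (m * p ^ j) + 1) :
    ∀ e : ℕ, FPractical f (m * p ^ e) := by
  intro e
  induction e with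
  | zero => simpa using hm
  | succ e ih =>
    have hm0 : 0 < m := hm.1
    have hM0 : (0:ℕ) < m * p ^ e := Nat.mul_pos hm0 (pow_pos hp.pos e)
    set A := Sf f (m * p ^ e) with hA
    set B := Sf f m with hB
    set c := f (p ^ (e + 1)) with hc
    have hc1 : 1 ≤ c := one_le_fpow hf1 hmono hp _
    have hcopm : Nat.Coprime m (p ^ (e+1)) := (hcop.symm.pow_right _)
    have hcopm' : Nat.Coprime m (p ^ e) := (hcop.symm.pow_right _)
    have hSsplit : Sf f (m * p ^ (e + 1)) = A + B * c := by
      rw [Sf_mul hf1 hmul hcopm, hA, Sf_mul hf1 hmul hcopm',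
        Sf_prime_pow f hp, Sf_prime_pow f hp, Finset.sum_range_succ, Nat.mul_add, hc]
    refine ⟨Nat.mul_pos hm0 (pow_pos hp.pos _), fun t ht hle => ?_⟩
    rw [hSsplit] at hle
    set v := min B (t / c) with hv
    have hcv : c * v ≤ t := by
      calc c * v ≤ c * (t / c) := Nat.mul_le_mul_left c (min_le_right _ _)
        _ ≤ t := Nat.mul_div_le t c
    set r := t - c * v with hr
    have hrA : r ≤ A := by
      rcases le_total B (t / c) with h | h
      · have hvB : v = B := min_eq_left h
        rw [hr, hvB, Nat.sub_le_iff_le_add]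
        calc t ≤ A + B * c := hle
          _ = A + c * B := by ring
      · have hvc : v = t / c := min_eq_right h
        have h5 : c * (t / c) + t % c = t := Nat.div_add_mod t c
        have h4 : r = t % c := by
          rw [hr, hvc]
          generalize c * (t / c) = u at h5 ⊢
          omega
        have hlt : t % c < c := Nat.mod_lt _ (by omega)
        have hcA : c ≤ A + 1 := hbound e
        omega
    obtain ⟨D1, hD1sub, hD1sum⟩ := ih.repr hrA
    obtain ⟨D2, hD2sub, hD2sum⟩ := hm.repr (show v ≤ B from min_le_left _ _)
    classical
    set D := D1 ∪ D2.image (· * p ^ (e + 1)) with hD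
    have hpne : (0:ℕ) < p ^ (e+1) := pow_pos hp.pos _
    refine ⟨D, ?_, ?_⟩
    · intro x hx
      rw [hD, Finset.mem_union] at hx
      rcases hx with hx | hx
      · exact Nat.divisors_subset_of_dvd (Nat.mul_pos hm0 (pow_pos hp.pos _)).ne'
          (mul_dvd_mul_left m (pow_dvd_pow p (by omega))) (hD1sub hx)
      · rw [Finset.mem_image] at hx
        obtain ⟨d, hd, rfl⟩ := hx
        have hdm : d ∣ m := (Nat.mem_divisors.1 (hD2sub hd)).1
        exact Nat.mem_divisors.2 ⟨mul_dvd_mul hdm dvd_rfl, (Nat.mul_pos hm0 (pow_pos hp.pos _)).ne'⟩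
    · have hdisj : Disjoint D1 (D2.image (· * p ^ (e + 1))) := by
        rw [Finset.disjoint_right]
        intro x hx hx1
        rw [Finset.mem_image] at hx
        obtain ⟨d, hd, rfl⟩ := hx
        have hxdvd : d * p ^ (e+1) ∣ m * p ^ e := (Nat.mem_divisors.1 (hD1sub hx1)).1
        have hpdvd : p ^ (e+1) ∣ m * p ^ e := dvd_trans (dvd_mul_left _ _) hxdvd
        have : p ∣ m := by
          have h1 : p * p ^ e ∣ m * p ^ e := by rwa [← pow_succ'] 
          exact (Nat.mul_dvd_mul_iff_right (pow_pos hp.pos e)).1 h1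
        exact (hp.coprime_iff_not_dvd.1 hcop) this
      have hinj : Set.InjOn (· * p ^ (e + 1)) D2 := fun a _ b _ hab =>
        Nat.eq_of_mul_eq_mul_right hpne hab
      rw [hD, Finset.sum_union hdisj, Finset.sum_image hinj]
      have himg : ∑ d ∈ D2, f (d * p ^ (e + 1)) = v * c := by
        rw [hD2sum, Finset.sum_mul]
        apply Finset.sum_congr rfl
        intro d hd
        have hdm : d ∣ m := (Nat.mem_divisors.1 (hD2sub hd)).1
        exact hmul d _ ((Nat.Coprime.coprime_dvd_left hdm hcop.symm).pow_right _)
      rw [himg, ← hD1sum, hr]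
      have hcomm : v * c = c * v := Nat.mul_comm v c
      omega
lemma f_prime_dvd_le (hf1 : f 1 = 1)
    (hmul : ∀ a b : ℕ, Nat.Coprime a b → f (a * b) = f a * f b)
    (hmono : ∀ p k : ℕ, p.Prime → 1 ≤ k → f (p ^ (k - 1)) ≤ f (p ^ k))
    {r d : ℕ} (hr : r.Prime) (hrd : r ∣ d) (hd : d ≠ 0) : f r ≤ f d := by
  have hsplit : r ^ d.factorization r * (d / r ^ d.factorization r) = d :=
    Nat.ordProj_mul_ordCompl_eq_self d r
  have hcop : Nat.Coprime (r ^ d.factorization r) (d / r ^ d.factorization r) :=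
    (Nat.coprime_ordCompl hr hd).pow_left _
  have h1 : 1 ≤ d.factorization r := hr.factorization_pos_of_dvd hd hrd
  have hne : d / r ^ d.factorization r ≠ 0 := (Nat.ordCompl_pos r hd).ne'
  calc f r = f (r ^ 1) := by rw [pow_one]
    _ ≤ f (r ^ d.factorization r) := fpow_mono hf1 hmono hr h1
    _ = f (r ^ d.factorization r) * 1 := (Nat.mul_one _).symm
    _ ≤ f (r ^ d.factorization r) * f (d / r ^ d.factorization r) :=
        Nat.mul_le_mul_left _ (one_le_f hf1 hmul hmono _ hne)
    _ = f d := by rw [← hmul _ _ hcop, hsplit]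

/-- Key lemma for the forward direction: if `m` is `f`-practical, `T` is a set of primes of `m`
such that every prime of `m` outside `T` has `f`-value at least `c`, and `c ≤ Sf f m + 1`,
then `c ≤ Sf f (∏_{q ∈ T} q ^ v_q(m)) + 1`. -/
lemma key_prefix (hf1 : f 1 = 1)
    (hmul : ∀ a b : ℕ, Nat.Coprime a b → f (a * b) = f a * f b)
    (hmono : ∀ p k : ℕ, p.Prime → 1 ≤ k → f (p ^ (k - 1)) ≤ f (p ^ k))
    {m c : ℕ} {T : Finset ℕ} (hm : FPractical f m) (hT : T ⊆ m.primeFactors)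
    (hc1 : 1 ≤ c) (hcm : c ≤ Sf f m + 1)
    (hout : ∀ r ∈ m.primeFactors, r ∉ T → c ≤ f r) :
    c ≤ Sf f (∏ q ∈ T, q ^ m.factorization q) + 1 := by
  classical
  set M := ∏ q ∈ T, q ^ m.factorization q with hM
  have hm0 : 0 < m := hm.1
  have hMdvd : M ∣ m := by
    have h1 : M ∣ ∏ q ∈ m.primeFactors, q ^ m.factorization q :=
      Finset.prod_dvd_prod_of_subset _ _ _ hT
    rwa [← Nat.prod_factorization_eq_prod_primeFactors,
        Nat.factorization_prod_pow_eq_self hm0.ne'] at h1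
  have hM0 : M ≠ 0 := fun h => by simp [h] at hMdvd; omega
  by_contra hlt
  push_neg at hlt
  set t := Sf f M + 1 with ht
  have ht1 : 1 ≤ t := by omega
  have htm : t ≤ Sf f m := by omega
  obtain ⟨D, hDsub, hDsum⟩ := hm.2 t ht1 htm
  -- every element of D divides M, or some element has a prime factor outside T
  by_cases hall : ∀ d ∈ D, d ∣ M
  · have : D ⊆ M.divisors := fun d hd =>
      Nat.mem_divisors.2 ⟨hall d hd, hM0⟩
    have : t ≤ Sf f M := hDsum ▸ Finset.sum_le_sum_of_subset this
    omega
  · push_neg at hall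
    obtain ⟨d, hdD, hdM⟩ := hall
    have hdm : d ∣ m := (Nat.mem_divisors.1 (hDsub hdD)).1
    have hd0 : d ≠ 0 := (Nat.pos_of_mem_divisors (hDsub hdD)).ne'
    -- there is a prime of d outside T
    have hex : ∃ r ∈ d.primeFactors, r ∉ T := by
      by_contra hno
      push_neg at hno
      apply hdM
      rw [← Nat.factorization_le_iff_dvd hd0 hM0]
      intro q
      by_cases hq : q ∈ d.primeFactors
      · have hqT : q ∈ T := hno q hq
        have h2 : d.factorization q ≤ m.factorization q :=
          (Nat.factorization_le_iff_dvd hd0 hm0.ne').2 hdm q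
        have h3 : q ^ m.factorization q ∣ M := Finset.dvd_prod_of_mem _ hqT
        have hqp : q.Prime := Nat.prime_of_mem_primeFactors (hT hqT)
        have h4 : m.factorization q ≤ M.factorization q :=
          (Nat.Prime.pow_dvd_iff_le_factorization hqp hM0).1 h3
        omega
      · have : d.factorization q = 0 := by
          rw [← Nat.support_factorization] at hq
          exact Finsupp.notMem_support_iff.1 hq
        simp [this]
    obtain ⟨r, hrd, hrT⟩ := hex
    have hrm : r ∈ m.primeFactors := Nat.primeFactors_mono hdm hm0.ne' hrd
    have hrp : r.Prime := Nat.prime_of_mem_primeFactors hrm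
    have h5 : c ≤ f r := hout r hrm hrT
    have h6 : f r ≤ f d := f_prime_dvd_le hf1 hmul hmono hrp
      (Nat.dvd_of_mem_primeFactors hrd) hd0
    have h7 : f d ≤ t := hDsum ▸ Finset.single_le_sum (fun i _ => Nat.zero_le _) hdD
    omega
lemma not_mem_take {α : Type*} {l : List α} (hnd : l.Nodup) {i : ℕ} (hi : i < l.length) :
    l.get ⟨i, hi⟩ ∉ l.take i := by
  intro hmem
  obtain ⟨j, hj, hjs⟩ := List.mem_iff_getElem.1 hmem
  have hji : j < i := by
    have := hj
    rw [List.length_take] at this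
    omega
  have hjl : j < l.length := by omega
  simp only [List.getElem_take, List.get_eq_getElem] at hjs
  have := (List.Nodup.getElem_inj_iff hnd).1 hjs
  omega

lemma sorted_take_le {f : ℕ → ℕ} {l : List ℕ} (hsort : l.Pairwise (fun p q => f p ≤ f q))
    {i : ℕ} (hi : i < l.length) {x : ℕ} (hx : x ∈ l) (hnx : x ∉ l.take i) :
    f (l.get ⟨i, hi⟩) ≤ f x := by
  obtain ⟨j, hj, rfl⟩ := List.mem_iff_getElem.1 hx
  rcases lt_trichotomy j i with h | rfl | h
  · exfalso
    apply hnx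
    apply List.mem_iff_getElem.2
    exact ⟨j, by rw [List.length_take]; omega, by simp [List.getElem_take]⟩
  · exact le_refl _
  · exact List.pairwise_iff_getElem.1 hsort i j hi hj h

lemma prefix_prod_pos {l : List ℕ} {n : ℕ} (htf : l.toFinset = n.primeFactors)
    (g : ℕ → ℕ) (hg : ∀ q, q.Prime → 0 < g q) (i : ℕ) :
    0 < ((l.take i).map g).prod := by
  apply List.prod_pos
  intro x hx
  rw [List.mem_map] at hx
  obtain ⟨q, hq, rfl⟩ := hx
  have hql : q ∈ l := List.mem_of_mem_take hq
  have : q ∈ n.primeFactors := htf ▸ List.mem_toFinset.2 hql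
  exact hg q (Nat.prime_of_mem_primeFactors this)

lemma convenient_of_cond (hf1 : f 1 = 1)
    (hmul : ∀ a b : ℕ, Nat.Coprime a b → f (a * b) = f a * f b)
    (hmono : ∀ p k : ℕ, p.Prime → 1 ≤ k → f (p ^ (k - 1)) ≤ f (p ^ k))
    (H : ∀ p m : ℕ, p.Prime → 0 < m → Nat.Coprime p m → FPractical f m →
        f p ≤ Sf f m + 1 → ∀ k : ℕ, f (p ^ (k + 1)) ≤ Sf f (m * p ^ k) + 1) :
    ∀ n : ℕ, (0 < n ∧ ∃ l : List ℕ,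
      l.Nodup ∧ l.toFinset = n.primeFactors ∧ l.Pairwise (fun p q => f p ≤ f q) ∧
      ∀ i : Fin l.length,
        f (l.get i) ≤ Sf f (((l.take i).map fun p => p ^ n.factorization p).prod) + 1) →
      FPractical f n := by
  rintro n ⟨hn0, l, hnd, htf, hsort, hcond⟩
  set g : ℕ → ℕ := fun p => p ^ n.factorization p with hg
  have hgpos : ∀ q : ℕ, q.Prime → 0 < g q := fun q hq => pow_pos hq.pos _
  have claim : ∀ i : ℕ, i ≤ l.length → FPractical f ((l.take i).map g).prod := by
    intro i
    induction i with
    | zero => intro _; simpa using FPractical.one hf1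
    | succ i ih =>
      intro hi
      have hi' : i < l.length := hi
      have IH := ih (le_of_lt hi')
      set s := l.get ⟨i, hi'⟩ with hs_def
      have hs_mem : s ∈ l := List.get_mem l ⟨i, hi'⟩
      have hs_pf : s ∈ n.primeFactors := htf ▸ List.mem_toFinset.2 hs_mem
      have hs : s.Prime := Nat.prime_of_mem_primeFactors hs_pf
      have htake : l.take (i + 1) = l.take i ++ [s] := by
        rw [List.take_succ, List.getElem?_eq_getElem hi']
        rfl
      have hprod : ((l.take (i + 1)).map g).prod = ((l.take i).map g).prod * g s := by
        rw [htake]; simp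
      have hs_not : s ∉ l.take i := not_mem_take hnd hi'
      have hmpos : 0 < ((l.take i).map g).prod := prefix_prod_pos htf g hgpos i
      have hcop : Nat.Coprime s (((l.take i).map g).prod) := by
        apply Nat.coprime_list_prod_right_iff.2
        intro x hx
        rw [List.mem_map] at hx
        obtain ⟨q, hq, rfl⟩ := hx
        have hql : q ∈ l := List.mem_of_mem_take hq
        have hqp : q.Prime := Nat.prime_of_mem_primeFactors
          (htf ▸ List.mem_toFinset.2 hql)
        have hqs : q ≠ s := fun h => hs_not (h ▸ hq)
        exact (Nat.Coprime.pow_right _ ((Nat.coprime_primes hs hqp).2 (Ne.symm hqs)))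
      have hfs : f s ≤ Sf f ((l.take i).map g).prod + 1 := hcond ⟨i, hi'⟩
      have hbound := H s _ hs hmpos hcop IH hfs
      rw [hprod]
      exact fpractical_mul_pow hf1 hmul hmono hs hcop IH hbound _
  have hfin := claim l.length (le_refl _)
  rw [List.take_length] at hfin
  have hn : ((l.map g).prod) = n := by
    rw [← List.prod_toFinset g hnd, htf, hg]
    rw [← Nat.prod_factorization_eq_prod_primeFactors,
      Nat.factorization_prod_pow_eq_self hn0.ne']
  rwa [hn] at hfin
lemma cond_of_convenient (hf1 : f 1 = 1)
    (hmul : ∀ a b : ℕ, Nat.Coprime a b → f (a * b) = f a * f b)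
    (hmono : ∀ p k : ℕ, p.Prime → 1 ≤ k → f (p ^ (k - 1)) ≤ f (p ^ k))
    (hconv : ∀ n : ℕ, (0 < n ∧ ∃ l : List ℕ,
      l.Nodup ∧ l.toFinset = n.primeFactors ∧ l.Pairwise (fun p q => f p ≤ f q) ∧
      ∀ i : Fin l.length,
        f (l.get i) ≤ Sf f (((l.take i).map fun p => p ^ n.factorization p).prod) + 1) →
      FPractical f n)
    {p m : ℕ} (hp : p.Prime) (hm0 : 0 < m) (hcop : Nat.Coprime p m)
    (hmF : FPractical f m) (hfp : f p ≤ Sf f m + 1) (k : ℕ) :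
    f (p ^ (k + 1)) ≤ Sf f (m * p ^ k) + 1 := by
  classical
  by_contra hlt
  push_neg at hlt
  set n := m * p ^ (k + 1) with hn
  have hpk0 : (p : ℕ) ^ (k + 1) ≠ 0 := (pow_pos hp.pos _).ne'
  have hn0 : 0 < n := Nat.mul_pos hm0 (pow_pos hp.pos _)
  have hpnm : ¬ p ∣ m := hp.coprime_iff_not_dvd.1 hcop
  have hfactp : m.factorization p = 0 := Nat.factorization_eq_zero_of_not_dvd hpnm
  have hpf_n : n.primeFactors = m.primeFactors ∪ {p} := by
    rw [hn, Nat.primeFactors_mul hm0.ne' hpk0,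
      Nat.primeFactors_prime_pow (by omega) hp]
  have hfact_n : ∀ q : ℕ, q ≠ p → n.factorization q = m.factorization q := by
    intro q hq
    rw [hn, Nat.factorization_mul hm0.ne' hpk0, Finsupp.add_apply,
      hp.factorization_pow, Finsupp.single_apply, if_neg (fun h => hq h.symm)]
    omega
  -- build the sorted list
  set r : ℕ → ℕ → Prop := fun a b => f a ≤ f b with hr
  letI : DecidableRel r := fun a b => Nat.decLe _ _
  haveI : Std.Total r := ⟨fun a b => le_total _ _⟩
  haveI : IsTrans ℕ r := ⟨fun _ _ _ => le_trans⟩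
  set l0 := n.primeFactors.toList with hl0
  set l := List.insertionSort r l0 with hl
  have hperm : l.Perm l0 := List.perm_insertionSort r l0
  have hnd : l.Nodup := hperm.nodup_iff.2 (Finset.nodup_toList _)
  have htf : l.toFinset = n.primeFactors := by
    rw [List.toFinset_eq_of_perm _ _ hperm, hl0, Finset.toList_toFinset]
  have hsort : l.Pairwise r := List.pairwise_insertionSort r l0
  have hweak : FPractical f n := by
    apply hconv n
    refine ⟨hn0, l, hnd, htf, hsort, ?_⟩
    intro i
    have hi' : (i : ℕ) < l.length := i.isLt
    have hs_mem : l.get i ∈ l := List.get_mem l i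
    have hs_pf : l.get i ∈ n.primeFactors := htf ▸ List.mem_toFinset.2 hs_mem
    have hsp : (l.get i).Prime := Nat.prime_of_mem_primeFactors hs_pf
    have hT'sub : ((l.take (i : ℕ)).toFinset.erase p) ⊆ m.primeFactors := by
      intro q hq
      have hqp : q ≠ p := Finset.ne_of_mem_erase hq
      have hqT : q ∈ (l.take (i : ℕ)).toFinset := Finset.mem_of_mem_erase hq
      have hql : q ∈ l := List.mem_of_mem_take (List.mem_toFinset.1 hqT)
      have : q ∈ n.primeFactors := htf ▸ List.mem_toFinset.2 hql
      rw [hpf_n, Finset.mem_union, Finset.mem_singleton] at this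
      tauto
    have hc1 : 1 ≤ f (l.get i) := one_le_f hf1 hmul hmono _ hsp.pos.ne'
    have hcm : f (l.get i) ≤ Sf f m + 1 := by
      rcases eq_or_ne (l.get i) p with heq | hsp'
      · rw [heq]; exact hfp
      · have : l.get i ∈ m.primeFactors := by
          have := hs_pf
          rw [hpf_n, Finset.mem_union, Finset.mem_singleton] at this
          tauto
        have := f_le_Sf f (Nat.dvd_of_mem_primeFactors this) hm0.ne'
        omega
    have hout : ∀ q ∈ m.primeFactors, q ∉ ((l.take (i : ℕ)).toFinset.erase p) →
        f (l.get i) ≤ f q := by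
      intro q hqm hqT'
      have hqp : q ≠ p := fun h => hpnm (h ▸ Nat.dvd_of_mem_primeFactors hqm)
      have hqT : q ∉ (l.take (i : ℕ)).toFinset :=
        fun h => hqT' (Finset.mem_erase.2 ⟨hqp, h⟩)
      have hql : q ∈ l := by
        apply List.mem_toFinset.1
        rw [htf, hpf_n]
        exact Finset.mem_union_left _ hqm
      have hqtake : q ∉ l.take (i : ℕ) := fun h => hqT (List.mem_toFinset.2 h)
      exact sorted_take_le hsort hi' hql hqtake
    have hkey : f (l.get i) ≤
        Sf f (∏ q ∈ ((l.take (i : ℕ)).toFinset.erase p), q ^ m.factorization q) + 1 :=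
      key_prefix hf1 hmul hmono hmF hT'sub hc1 hcm hout
    have hndt : (l.take (i : ℕ)).Nodup := hnd.sublist (List.take_sublist _ _)
    have hM'eq : (∏ q ∈ ((l.take (i : ℕ)).toFinset.erase p), q ^ m.factorization q)
        = ∏ q ∈ ((l.take (i : ℕ)).toFinset.erase p), q ^ n.factorization q :=
      Finset.prod_congr rfl fun q hq => by
        rw [hfact_n q (Finset.ne_of_mem_erase hq)]
    have hPT : ((l.take (i : ℕ)).map (fun q => q ^ n.factorization q)).prod
        = ∏ q ∈ (l.take (i : ℕ)).toFinset, q ^ n.factorization q :=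
      (List.prod_toFinset _ hndt).symm
    have hdvd : (∏ q ∈ ((l.take (i : ℕ)).toFinset.erase p), q ^ m.factorization q)
        ∣ ((l.take (i : ℕ)).map (fun q => q ^ n.factorization q)).prod := by
      rw [hM'eq, hPT]
      exact Finset.prod_dvd_prod_of_subset _ _ _ (Finset.erase_subset _ _)
    have hP0 : 0 < ((l.take (i : ℕ)).map (fun q => q ^ n.factorization q)).prod :=
      prefix_prod_pos htf _ (fun q hq => pow_pos hq.pos _) i
    have hmono' := Sf_dvd_le f hdvd hP0.ne'
    omega
  -- derive contradiction from f-practicality of n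
  have hcopk : Nat.Coprime m (p ^ k) := hcop.symm.pow_right _
  have hcopk1 : Nat.Coprime m (p ^ (k + 1)) := hcop.symm.pow_right _
  set t := Sf f (m * p ^ k) + 1 with ht
  have hSn : Sf f n = Sf f (m * p ^ k) + Sf f m * f (p ^ (k + 1)) := by
    rw [hn, Sf_mul hf1 hmul hcopk1, Sf_mul hf1 hmul hcopk,
      Sf_prime_pow f hp, Sf_prime_pow f hp, Finset.sum_range_succ (n := k + 1),
      Nat.mul_add]
  have hSm1 : 1 ≤ Sf f m := one_le_Sf hf1 hm0.ne'
  have hfp1 : 1 ≤ f (p ^ (k + 1)) := one_le_fpow hf1 hmono hp _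
  have htn : t ≤ Sf f n := by
    rw [hSn]
    have : 1 ≤ Sf f m * f (p ^ (k + 1)) := Nat.one_le_iff_ne_zero.2 (by positivity)
    omega
  obtain ⟨D, hDsub, hDsum⟩ := hweak.2 t (by omega) htn
  by_cases hex : ∃ d ∈ D, p ^ (k + 1) ∣ d
  · obtain ⟨d, hdD, hdp⟩ := hex
    have hd0 : d ≠ 0 := (Nat.pos_of_mem_divisors (hDsub hdD)).ne'
    have hfd : f (p ^ (k + 1)) ≤ f d := by
      have hkd : k + 1 ≤ d.factorization p :=
        (hp.pow_dvd_iff_le_factorization hd0).1 hdp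
      calc f (p ^ (k + 1)) ≤ f (p ^ d.factorization p) :=
            fpow_mono hf1 hmono hp hkd
        _ ≤ f d := by
            have hd' : p ^ d.factorization p * (d / p ^ d.factorization p) = d :=
              Nat.ordProj_mul_ordCompl_eq_self d p
            have hcop' : Nat.Coprime (p ^ d.factorization p) (d / p ^ d.factorization p) :=
              (Nat.coprime_ordCompl hp hd0).pow_left _
            have hne : d / p ^ d.factorization p ≠ 0 := (Nat.ordCompl_pos p hd0).ne'
            calc f (p ^ d.factorization p)
                = f (p ^ d.factorization p) * 1 := (Nat.mul_one _).symm
              _ ≤ f (p ^ d.factorization p) * f (d / p ^ d.factorization p) :=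
                  Nat.mul_le_mul_left _ (one_le_f hf1 hmul hmono _ hne)
              _ = f d := by rw [← hmul _ _ hcop', hd']
    have hdt : f d ≤ t := hDsum ▸ Finset.single_le_sum (fun i _ => Nat.zero_le _) hdD
    omega
  · push_neg at hex
    have hmpk0 : m * p ^ k ≠ 0 := (Nat.mul_pos hm0 (pow_pos hp.pos _)).ne'
    have hDsub' : D ⊆ (m * p ^ k).divisors := by
      intro d hdD
      have hd0 : d ≠ 0 := (Nat.pos_of_mem_divisors (hDsub hdD)).ne'
      have hdn : d ∣ n := (Nat.mem_divisors.1 (hDsub hdD)).1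
      refine Nat.mem_divisors.2 ⟨?_, hmpk0⟩
      rw [← Nat.factorization_le_iff_dvd hd0 hmpk0]
      intro q
      have hdq : d.factorization q ≤ n.factorization q :=
        (Nat.factorization_le_iff_dvd hd0 hn0.ne').2 hdn q
      have hmq : (m * p ^ k).factorization q
          = m.factorization q + (if p = q then k else 0) := by
        rw [Nat.factorization_mul hm0.ne' (pow_pos hp.pos k).ne', Finsupp.add_apply,
          hp.factorization_pow, Finsupp.single_apply]
      rcases eq_or_ne q p with rfl | hq
      · have hdk : d.factorization q ≤ k := by
          by_contra hgt
          push_neg at hgt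
          exact hex d hdD ((hp.pow_dvd_iff_le_factorization hd0).2 hgt)
        rw [hmq, if_pos rfl]
        omega
      · have : n.factorization q = m.factorization q := hfact_n q hq
        rw [hmq, if_neg (fun h => hq h.symm)]
        omega
    have : t ≤ Sf f (m * p ^ k) := hDsum ▸ Finset.sum_le_sum_of_subset hDsub'
    omega

end Helpers

/-- f is convenient iff for every prime p and every f-practical m coprime to p,
f(p) ≤ S_f(m) + 1 implies f(p^(k+1)) ≤ S_f(m * p^k) + 1 for all k ≥ 0. -/
theorem stmt6 (f : ℕ → ℕ) (hf1 : f 1 = 1)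
    (hmul : ∀ a b : ℕ, Nat.Coprime a b → f (a * b) = f a * f b)
    (hmono : ∀ p k : ℕ, p.Prime → 1 ≤ k → f (p ^ (k - 1)) ≤ f (p ^ k)) :
    Convenient f ↔
      ∀ p m : ℕ, p.Prime → 0 < m → Nat.Coprime p m → FPractical f m →
        f p ≤ Sf f m + 1 → ∀ k : ℕ, f (p ^ (k + 1)) ≤ Sf f (m * p ^ k) + 1 := by
  constructor
  · intro hconv p m hp hm0 hcop hmF hfp k
    exact cond_of_convenient hf1 hmul hmono (fun n h => hconv n h) hp hm0 hcop hmF hfp k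
  · intro H n hw
    exact convenient_of_cond hf1 hmul hmono H n hw
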